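/- Let 𝔅 be a unital C*-algebra and let 𝔄₁, 𝔄₂ be *-algebras each containing 𝔅 as a unital *-subalgebra, with positive conditional expectations Φ₁ : 𝔄₁ → 𝔅 and Φ₂ : 𝔄₂ → 𝔅. Let a₁,…,aₙ ∈ 𝔄₁ and a_{n+1},…,a_{n+m} ∈ 𝔄₂, and let A = (A_{ij}) be the (n+m)×(n+m) matrix over 𝔅 with entries A_{ij} = Φ₁(a_i* a_j) if i, j ≤ n; A_{ij} = Φ₁(a_i*) Φ₂(a_j) if i ≤ n < j; A_{ij} = Φ₂(a_i*) Φ₁(a_j) if j ≤ n < i; and A_{ij} = Φ₂(a_i* a_j) if i, j > n. Then A is a positive element of M_{n+m}(𝔅); equivalently, Σ_{i,j=1}^{n+m} c_i* A_{ij} c_j ≥ 0 in 𝔅 for all c₁,…,c_{n+m} ∈ 𝔅. -/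

import Mathlib

/-- The mixed moment matrix of Lemma 6.4: `A_{ij} = Φ₁(aᵢ* aⱼ)` if `i, j ≤ n`,
`A_{ij} = Φ₁(aᵢ*)Φ₂(aⱼ)` if `i ≤ n < j`, `A_{ij} = Φ₂(aᵢ*)Φ₁(aⱼ)` if `j ≤ n < i`,
and `A_{ij} = Φ₂(aᵢ* aⱼ)` if `i, j > n`. -/
noncomputable def mixedEntry {B A₁ A₂ : Type*} [Ring B] [Algebra ℂ B]
    [Ring A₁] [Algebra ℂ A₁] [StarRing A₁]
    [Ring A₂] [Algebra ℂ A₂] [StarRing A₂]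
    (Φ₁ : A₁ →ₗ[ℂ] B) (Φ₂ : A₂ →ₗ[ℂ] B) {n m : ℕ}
    (x : Fin n → A₁) (y : Fin m → A₂) (i j : Fin (n + m)) : B :=
  if hi : i.1 < n then
    if hj : j.1 < n then Φ₁ (star (x ⟨i.1, hi⟩) * x ⟨j.1, hj⟩)
    else Φ₁ (star (x ⟨i.1, hi⟩)) * Φ₂ (y ⟨j.1 - n, by have := j.isLt; omega⟩)
  else
    if hj : j.1 < n then
      Φ₂ (star (y ⟨i.1 - n, by have := i.isLt; omega⟩)) * Φ₁ (x ⟨j.1, hj⟩)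
    else Φ₂ (star (y ⟨i.1 - n, by have := i.isLt; omega⟩) *
      y ⟨j.1 - n, by have := j.isLt; omega⟩)

section auxlemmas


variable {B A : Type*} [Ring B] [Algebra ℂ B] [StarRing B] [StarModule ℂ B]
  [PartialOrder B] [StarOrderedRing B]
  [Ring A] [Algebra ℂ A] [StarRing A] [StarModule ℂ A]
  (ι : B →⋆ₐ[ℂ] A) (Φ : A →ₗ[ℂ] B)

theorem phi_star (hfix : ∀ c : B, Φ (ι c) = c)
    (hpos : ∀ a : A, 0 ≤ Φ (star a * a)) (z : A) :
    star (Φ z) = Φ (star z) := by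
  have hsa : ∀ w : A, star (Φ (star w * w)) = Φ (star w * w) :=
    fun w => (IsSelfAdjoint.of_nonneg (hpos w))
  have hone : Φ 1 = 1 := by rw [← map_one ι, hfix]
  have eq1 : star (Φ z) + star (Φ (star z)) = Φ z + Φ (star z) := by
    have h := hsa (1 + z)
    rw [star_add, star_one, add_mul, mul_add, mul_add, one_mul, one_mul, mul_one] at h
    simp only [map_add, star_add, hone, star_one, hsa z] at h
    have h' : (1 + Φ (star z * z)) + (star (Φ z) + star (Φ (star z)))
        = (1 + Φ (star z * z)) + (Φ z + Φ (star z)) := by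
      calc (1 + Φ (star z * z)) + (star (Φ z) + star (Φ (star z)))
          = 1 + star (Φ z) + (star (Φ (star z)) + Φ (star z * z)) := by abel
        _ = 1 + Φ z + (Φ (star z) + Φ (star z * z)) := h
        _ = (1 + Φ (star z * z)) + (Φ z + Φ (star z)) := by abel
    exact add_left_cancel h'
  have eq2 : star (Φ z) - star (Φ (star z)) = - Φ z + Φ (star z) := by
    have h := hsa (1 + Complex.I • z)
    rw [star_add, star_one, star_smul, add_mul, mul_add, mul_add, one_mul, one_mul, mul_one] at h
    simp only [Complex.star_def, Complex.conj_I, neg_smul, neg_mul, mul_neg, smul_mul_assoc,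
      mul_smul_comm, smul_smul, Complex.I_mul_I, neg_neg, one_smul, smul_neg, map_add, map_smul,
      map_neg, star_add, star_smul, star_neg, hone, star_one, hsa z] at h
    have h' : (1 + Φ (star z * z)) + (-(Complex.I • star (Φ z)) + Complex.I • star (Φ (star z)))
        = (1 + Φ (star z * z)) + (Complex.I • Φ z + -(Complex.I • Φ (star z))) := by
      calc (1 + Φ (star z * z)) + (-(Complex.I • star (Φ z)) + Complex.I • star (Φ (star z)))
          = 1 + -(Complex.I • star (Φ z)) + (Complex.I • star (Φ (star z)) + Φ (star z * z)) := by
            abel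
        _ = 1 + Complex.I • Φ z + (-(Complex.I • Φ (star z)) + Φ (star z * z)) := h
        _ = (1 + Φ (star z * z)) + (Complex.I • Φ z + -(Complex.I • Φ (star z))) := by abel
    have h2 := add_left_cancel h'
    have h3 := congrArg (fun b : B => Complex.I • b) h2
    simpa [smul_add, smul_neg, smul_smul, Complex.I_mul_I, neg_smul, one_smul, sub_eq_add_neg,
      neg_neg, add_comm] using h3
  have h2 : star (Φ z) + star (Φ z) = Φ (star z) + Φ (star z) := by
    calc star (Φ z) + star (Φ z)
        = (star (Φ z) + star (Φ (star z))) + (star (Φ z) - star (Φ (star z))) := by abel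
      _ = (Φ z + Φ (star z)) + (- Φ z + Φ (star z)) := by rw [eq1, eq2]
      _ = Φ (star z) + Φ (star z) := by abel
  have h3 : (2:ℂ) • star (Φ z) = (2:ℂ) • Φ (star z) := by
    rw [two_smul, two_smul]; exact h2
  have := congrArg (fun b : B => (2⁻¹ : ℂ) • b) h3
  simpa [smul_smul] using this

theorem phi_cauchy (hfix : ∀ c : B, Φ (ι c) = c)
    (hbimod : ∀ (c₁ c₂ : B) (x : A), Φ (ι c₁ * x * ι c₂) = c₁ * Φ x * c₂)
    (hpos : ∀ a : A, 0 ≤ Φ (star a * a)) (S : A) :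
    star (Φ S) * Φ S ≤ Φ (star S * S) := by
  have hstar := phi_star ι Φ hfix hpos
  have h1 : Φ (star S * ι (Φ S)) = star (Φ S) * Φ S := by
    have h := hbimod 1 (Φ S) (star S)
    rw [map_one, one_mul, one_mul] at h
    rw [h, ← hstar]
  have h2 : Φ (ι (star (Φ S)) * S) = star (Φ S) * Φ S := by
    have h := hbimod (star (Φ S)) 1 S
    rw [map_one, mul_one, mul_one] at h
    exact h
  have h3 : Φ (ι (star (Φ S)) * ι (Φ S)) = star (Φ S) * Φ S := by
    rw [← map_mul, hfix]
  have key : Φ (star (S - ι (Φ S)) * (S - ι (Φ S)))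
      = Φ (star S * S) - star (Φ S) * Φ S := by
    rw [star_sub, ← map_star, sub_mul, mul_sub, mul_sub, map_sub, map_sub, map_sub,
      h1, h2, h3]
    abel
  have h := hpos (S - ι (Φ S))
  rw [key] at h
  exact sub_nonneg.mp h

end auxlemmas

section entry


variable {B A₁ A₂ : Type*} [Ring B] [Algebra ℂ B]
    [Ring A₁] [Algebra ℂ A₁] [StarRing A₁]
    [Ring A₂] [Algebra ℂ A₂] [StarRing A₂]
    (Φ₁ : A₁ →ₗ[ℂ] B) (Φ₂ : A₂ →ₗ[ℂ] B) {n m : ℕ}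
    (x : Fin n → A₁) (y : Fin m → A₂)

theorem mixedEntry_cc (i j : Fin n) :
    mixedEntry Φ₁ Φ₂ x y (Fin.castAdd m i) (Fin.castAdd m j) = Φ₁ (star (x i) * x j) := by
  simp [mixedEntry]

theorem mixedEntry_cn (i : Fin n) (j : Fin m) :
    mixedEntry Φ₁ Φ₂ x y (Fin.castAdd m i) (Fin.natAdd n j)
      = Φ₁ (star (x i)) * Φ₂ (y j) := by
  simp [mixedEntry]

theorem mixedEntry_nc (i : Fin m) (j : Fin n) :
    mixedEntry Φ₁ Φ₂ x y (Fin.natAdd n i) (Fin.castAdd m j)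
      = Φ₂ (star (y i)) * Φ₁ (x j) := by
  simp [mixedEntry]

theorem mixedEntry_nn (i j : Fin m) :
    mixedEntry Φ₁ Φ₂ x y (Fin.natAdd n i) (Fin.natAdd n j)
      = Φ₂ (star (y i) * y j) := by
  simp [mixedEntry]

end entry

/-- Lemma 6.4: for positive conditional expectations
`Φ₁ : 𝔄₁ → 𝔅` and `Φ₂ : 𝔄₂ → 𝔅` and elements `a₁, …, aₙ ∈ 𝔄₁`,
`a_{n+1}, …, a_{n+m} ∈ 𝔄₂`, the mixed moment matrix `A = (A_{ij})` is a positive element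
of `M_{n+m}(𝔅)`; equivalently `Σ_{i,j} cᵢ* A_{ij} cⱼ ≥ 0` in `𝔅` for all
`c₁, …, c_{n+m} ∈ 𝔅`. -/
theorem mixed_moment_matrix_positive {B A₁ A₂ : Type*}
    [CStarAlgebra B] [PartialOrder B] [StarOrderedRing B]
    [Ring A₁] [Algebra ℂ A₁] [StarRing A₁] [StarModule ℂ A₁]
    [Ring A₂] [Algebra ℂ A₂] [StarRing A₂] [StarModule ℂ A₂]
    (ι₁ : B →⋆ₐ[ℂ] A₁) (hι₁ : Function.Injective ι₁)
    (ι₂ : B →⋆ₐ[ℂ] A₂) (hι₂ : Function.Injective ι₂)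
    (Φ₁ : A₁ →ₗ[ℂ] B) (Φ₂ : A₂ →ₗ[ℂ] B)
    (hfix₁ : ∀ c : B, Φ₁ (ι₁ c) = c)
    (hbimod₁ : ∀ (c₁ c₂ : B) (x : A₁), Φ₁ (ι₁ c₁ * x * ι₁ c₂) = c₁ * Φ₁ x * c₂)
    (hfix₂ : ∀ c : B, Φ₂ (ι₂ c) = c)
    (hbimod₂ : ∀ (c₁ c₂ : B) (x : A₂), Φ₂ (ι₂ c₁ * x * ι₂ c₂) = c₁ * Φ₂ x * c₂)
    (hpos₁ : ∀ a : A₁, 0 ≤ Φ₁ (star a * a))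
    (hpos₂ : ∀ a : A₂, 0 ≤ Φ₂ (star a * a))
    {n m : ℕ} (x : Fin n → A₁) (y : Fin m → A₂) :
    ∀ c : Fin (n + m) → B,
      0 ≤ ∑ i : Fin (n + m), ∑ j : Fin (n + m),
        star (c i) * mixedEntry Φ₁ Φ₂ x y i j * c j := by
  intro c
  have hstar₁ := phi_star ι₁ Φ₁ hfix₁ hpos₁
  have hstar₂ := phi_star ι₂ Φ₂ hfix₂ hpos₂
  set u : Fin n → A₁ := fun i => x i * ι₁ (c (Fin.castAdd m i)) with hu
  set v : Fin m → A₂ := fun j => y j * ι₂ (c (Fin.natAdd n j)) with hv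
  set S₁ : A₁ := ∑ i, u i with hS₁
  set S₂ : A₂ := ∑ j, v j with hS₂
  have hustar : ∀ i, star (u i) = ι₁ (star (c (Fin.castAdd m i))) * star (x i) := by
    intro i; rw [hu]; simp only [star_mul, map_star]
  have hvstar : ∀ j, star (v j) = ι₂ (star (c (Fin.natAdd n j))) * star (y j) := by
    intro j; rw [hv]; simp only [star_mul, map_star]
  have hB11 : ∑ i : Fin n, ∑ j : Fin n, star (c (Fin.castAdd m i)) *
        mixedEntry Φ₁ Φ₂ x y (Fin.castAdd m i) (Fin.castAdd m j) * c (Fin.castAdd m j)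
      = Φ₁ (star S₁ * S₁) := by
    rw [hS₁, star_sum, Finset.sum_mul_sum, map_sum]
    simp only [map_sum]
    refine Finset.sum_congr rfl fun i _ => Finset.sum_congr rfl fun j _ => ?_
    have e : star (u i) * u j = ι₁ (star (c (Fin.castAdd m i))) * (star (x i) * x j) *
        ι₁ (c (Fin.castAdd m j)) := by
      rw [hustar]; simp only [hu, mul_assoc]
    rw [e, hbimod₁, mixedEntry_cc]
  have hB12 : ∑ i : Fin n, ∑ j : Fin m, star (c (Fin.castAdd m i)) *
        mixedEntry Φ₁ Φ₂ x y (Fin.castAdd m i) (Fin.natAdd n j) * c (Fin.natAdd n j)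
      = star (Φ₁ S₁) * Φ₂ S₂ := by
    rw [hstar₁ S₁, hS₁, hS₂, star_sum, map_sum, map_sum, Finset.sum_mul_sum]
    refine Finset.sum_congr rfl fun i _ => Finset.sum_congr rfl fun j _ => ?_
    have e1 : Φ₁ (star (u i)) = star (c (Fin.castAdd m i)) * Φ₁ (star (x i)) := by
      have h := hbimod₁ (star (c (Fin.castAdd m i))) 1 (star (x i))
      rw [map_one, mul_one, mul_one] at h
      rw [hustar, h]
    have e2 : Φ₂ (v j) = Φ₂ (y j) * c (Fin.natAdd n j) := by
      have h := hbimod₂ 1 (c (Fin.natAdd n j)) (y j)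
      rw [map_one, one_mul, one_mul] at h
      rw [hv]; exact h
    rw [mixedEntry_cn, e1, e2, mul_assoc, mul_assoc, mul_assoc]
  have hB21 : ∑ i : Fin m, ∑ j : Fin n, star (c (Fin.natAdd n i)) *
        mixedEntry Φ₁ Φ₂ x y (Fin.natAdd n i) (Fin.castAdd m j) * c (Fin.castAdd m j)
      = star (Φ₂ S₂) * Φ₁ S₁ := by
    rw [hstar₂ S₂, hS₁, hS₂, star_sum, map_sum, map_sum, Finset.sum_mul_sum]
    refine Finset.sum_congr rfl fun i _ => Finset.sum_congr rfl fun j _ => ?_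
    have e1 : Φ₂ (star (v i)) = star (c (Fin.natAdd n i)) * Φ₂ (star (y i)) := by
      have h := hbimod₂ (star (c (Fin.natAdd n i))) 1 (star (y i))
      rw [map_one, mul_one, mul_one] at h
      rw [hvstar, h]
    have e2 : Φ₁ (u j) = Φ₁ (x j) * c (Fin.castAdd m j) := by
      have h := hbimod₁ 1 (c (Fin.castAdd m j)) (x j)
      rw [map_one, one_mul, one_mul] at h
      rw [hu]; exact h
    rw [mixedEntry_nc, e1, e2, mul_assoc, mul_assoc, mul_assoc]
  have hB22 : ∑ i : Fin m, ∑ j : Fin m, star (c (Fin.natAdd n i)) *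
        mixedEntry Φ₁ Φ₂ x y (Fin.natAdd n i) (Fin.natAdd n j) * c (Fin.natAdd n j)
      = Φ₂ (star S₂ * S₂) := by
    rw [hS₂, star_sum, Finset.sum_mul_sum, map_sum]
    simp only [map_sum]
    refine Finset.sum_congr rfl fun i _ => Finset.sum_congr rfl fun j _ => ?_
    have e : star (v i) * v j = ι₂ (star (c (Fin.natAdd n i))) * (star (y i) * y j) *
        ι₂ (c (Fin.natAdd n j)) := by
      rw [hvstar]; simp only [hv, mul_assoc]
    rw [e, hbimod₂, mixedEntry_nn]
  have key : ∑ i : Fin (n + m), ∑ j : Fin (n + m),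
        star (c i) * mixedEntry Φ₁ Φ₂ x y i j * c j
      = (Φ₁ (star S₁ * S₁) + star (Φ₁ S₁) * Φ₂ S₂)
        + (star (Φ₂ S₂) * Φ₁ S₁ + Φ₂ (star S₂ * S₂)) := by
    rw [Fin.sum_univ_add]
    congr 1
    · rw [← hB11, ← hB12, ← Finset.sum_add_distrib]
      exact Finset.sum_congr rfl fun i _ => Fin.sum_univ_add _
    · rw [← hB21, ← hB22, ← Finset.sum_add_distrib]
      exact Finset.sum_congr rfl fun i _ => Fin.sum_univ_add _
  rw [key]
  calc (0:B) ≤ star (Φ₁ S₁ + Φ₂ S₂) * (Φ₁ S₁ + Φ₂ S₂) := star_mul_self_nonneg _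
    _ = (star (Φ₁ S₁) * Φ₁ S₁ + star (Φ₁ S₁) * Φ₂ S₂)
        + (star (Φ₂ S₂) * Φ₁ S₁ + star (Φ₂ S₂) * Φ₂ S₂) := by
      rw [star_add, add_mul, mul_add, mul_add]
    _ ≤ (Φ₁ (star S₁ * S₁) + star (Φ₁ S₁) * Φ₂ S₂)
        + (star (Φ₂ S₂) * Φ₁ S₁ + Φ₂ (star S₂ * S₂)) :=
      add_le_add (add_le_add (phi_cauchy ι₁ Φ₁ hfix₁ hbimod₁ hpos₁ S₁) le_rfl)
        (add_le_add le_rfl (phi_cauchy ι₂ Φ₂ hfix₂ hbimod₂ hpos₂ S₂))
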